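/- arXiv:1401.2480 — 7 statements merged into one kernel-verified Lean document; each statement's English description precedes it below -/
import Mathlib

section
/- Suppose the set Ψ of fixed points of a continuous map A : ℝ^p → ℝ^p is finite, and suppose a sequence b^{(k+1)} = A(b^{(k)}) satisfies dist(b^{(k)}, Ψ) → 0 as k → ∞. Then there exists b ∈ Ψ such that b^{(k)} → b. -/
open Metric Filter
lemma finite_sep {α : Type*} [MetricSpace α] {s : Set α} (hs : s.Finite) :
    ∃ δ > 0, ∀ x ∈ s, ∀ y ∈ s, x ≠ y → δ ≤ dist x y := by
  classical
  set T := (hs.toFinset ×ˢ hs.toFinset).filter (fun q => q.1 ≠ q.2) with hT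
  rcases T.eq_empty_or_nonempty with hTe | hTne
  · refine ⟨1, one_pos, fun x hx y hy hxy => ?_⟩
    exfalso
    have : (x, y) ∈ T := by
      simp [hT, Finset.mem_filter, Finset.mem_product, hs.mem_toFinset, hx, hy, hxy]
    simp [hTe] at this
  · refine ⟨T.inf' hTne (fun q => dist q.1 q.2), ?_, fun x hx y hy hxy => ?_⟩
    · obtain ⟨q, hq, hqe⟩ := Finset.exists_mem_eq_inf' hTne (fun q => dist q.1 q.2)
      rw [hqe]
      exact dist_pos.mpr (Finset.mem_filter.mp hq).2
    · have hmem : (x, y) ∈ T := Finset.mem_filter.mpr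
        ⟨Finset.mem_product.mpr ⟨hs.mem_toFinset.mpr hx, hs.mem_toFinset.mpr hy⟩, hxy⟩
      exact Finset.inf'_le (fun q => dist q.1 q.2) hmem

set_option maxHeartbeats 1000000 in

theorem converge_to_fixed_point {p : ℕ}
    (A : EuclideanSpace ℝ (Fin p) → EuclideanSpace ℝ (Fin p)) (hA : Continuous A)
    (hfin : Set.Finite {x | A x = x}) (hne : {x | A x = x}.Nonempty)
    (b : ℕ → EuclideanSpace ℝ (Fin p)) (hrec : ∀ k, b (k + 1) = A (b k))
    (hdist : Filter.Tendsto (fun k => Metric.infDist (b k) {x | A x = x})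
      Filter.atTop (nhds 0)) :
    ∃ ψ : EuclideanSpace ℝ (Fin p), A ψ = ψ ∧ Filter.Tendsto b Filter.atTop (nhds ψ) := by
  classical
  set S : Set (EuclideanSpace ℝ (Fin p)) := {x | A x = x} with hSdef
  have hS : IsClosed S := hfin.isClosed
  -- nearest point selection
  have hnear : ∀ k, ∃ ψ ∈ S, Metric.infDist (b k) S = dist (b k) ψ :=
    fun k => hS.exists_infDist_eq_dist hne (b k)
  choose ψ hψS hψd using hnear
  -- minimal separation δ between distinct fixed points
  obtain ⟨δ, hδ0, hδ⟩ := finite_sep hfin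
  -- continuity radii
  have hcont : ∀ y, ∃ r > 0, ∀ x, dist x y < r → dist (A x) (A y) < δ / 3 :=
    fun y => Metric.continuous_iff.mp hA y (δ / 3) (by positivity)
  choose r hr0 hrball using hcont
  have hFne : hfin.toFinset.Nonempty := hfin.toFinset_nonempty.mpr hne
  set ε := min (δ / 3) (hfin.toFinset.inf' hFne r) with hε
  have hε0 : 0 < ε := lt_min (by positivity) (Finset.lt_inf'_iff _ |>.mpr fun y _ => hr0 y)
  have hεδ : ε ≤ δ / 3 := min_le_left _ _
  have hεr : ∀ y ∈ S, ε ≤ r y := fun y hy =>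
    (min_le_right _ _).trans (Finset.inf'_le _ (hfin.mem_toFinset.mpr hy))
  -- eventually close
  obtain ⟨N, hN⟩ := (Filter.eventually_atTop).mp (hdist.eventually (gt_mem_nhds hε0))
  have hdk : ∀ k ≥ N, dist (b k) (ψ k) < ε := fun k hk => (hψd k) ▸ hN k hk
  -- nearest point stabilizes
  have hstep : ∀ k ≥ N, ψ (k + 1) = ψ k := by
    intro k hk
    have h1 : dist (b (k + 1)) (ψ k) < δ / 3 := by
      rw [hrec k]
      have := hrball (ψ k) (b k) ((hdk k hk).trans_le (hεr _ (hψS k)))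
      rwa [hψS k] at this
    have h2 : dist (b (k + 1)) (ψ (k + 1)) < δ / 3 :=
      (hdk (k + 1) (le_trans hk (Nat.le_succ k))).trans_le hεδ
    by_contra hne'
    have := hδ _ (hψS (k + 1)) _ (hψS k) hne'
    have h3 : dist (ψ (k + 1)) (ψ k) ≤ dist (ψ (k + 1)) (b (k + 1)) + dist (b (k + 1)) (ψ k) :=
      dist_triangle _ _ _
    rw [dist_comm (ψ (k + 1)) (b (k + 1))] at h3
    linarith
  have hconst : ∀ k ≥ N, ψ k = ψ N := by
    intro k hk
    induction k, hk using Nat.le_induction with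
    | base => rfl
    | succ k hk ih => rw [hstep k hk, ih]
  -- conclude
  refine ⟨ψ N, hψS N, ?_⟩
  rw [tendsto_iff_dist_tendsto_zero]
  refine hdist.congr' ?_
  filter_upwards [Filter.eventually_atTop.mpr ⟨N, fun k hk => hk⟩] with k hk
  rw [hψd k, hconst k hk]
end

section
/- For the one-dimensional recursion b^{(k+1)} = |b^{(k)}| β̂ / (λ/n + |b^{(k)}|) with b^{(0)} ≠ 0 and β̂ ≠ 0, the closed form b^{(k)} = c^k λ |b^{(0)}| sign(β̂) / (λ + n |b^{(0)}| Σ_{m=0}^{k−1} c^m) holds for all k ≥ 1, where c = n|β̂|/λ. -/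
theorem slog_one_dim_closed_form (lam : ℝ) (hlam : 0 < lam) (n : ℕ) (hn : 1 ≤ n)
    (βhat : ℝ) (hβhat : βhat ≠ 0) (b : ℕ → ℝ) (hb0 : b 0 ≠ 0)
    (hrec : ∀ k, b (k + 1) = |b k| * βhat / (lam / n + |b k|)) :
    ∀ k : ℕ, 1 ≤ k →
      b k = ((n : ℝ) * |βhat| / lam) ^ k * lam * |b 0| * Real.sign βhat /
        (lam + n * |b 0| * ∑ m ∈ Finset.range k, ((n : ℝ) * |βhat| / lam) ^ m) := by
  have hn' : (0 : ℝ) < n := by exact_mod_cast Nat.lt_of_lt_of_le Nat.zero_lt_one hn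
  have hβabs : 0 < |βhat| := abs_pos.mpr hβhat
  have hb0abs : 0 < |b 0| := abs_pos.mpr hb0
  set c : ℝ := (n : ℝ) * |βhat| / lam with hc_def
  have hc : 0 < c := div_pos (mul_pos hn' hβabs) hlam
  have hsign : |Real.sign βhat| = 1 := by
    rcases lt_or_gt_of_ne hβhat with h | h
    · rw [Real.sign_of_neg h]; norm_num
    · rw [Real.sign_of_pos h]; norm_num
  have hD : ∀ k : ℕ, 0 < lam + n * |b 0| * ∑ m ∈ Finset.range k, c ^ m := by
    intro k
    have : 0 ≤ (n : ℝ) * |b 0| * ∑ m ∈ Finset.range k, c ^ m := by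
      apply mul_nonneg (mul_nonneg hn'.le hb0abs.le)
      exact Finset.sum_nonneg fun m _ => (pow_pos hc m).le
    linarith
  intro k hk
  induction k with
  | zero => omega
  | succ k ih =>
    rcases Nat.eq_or_lt_of_le hk with h1 | h1
    · -- k + 1 = 1, i.e. k = 0
      have hk0 : k = 0 := by omega
      subst hk0
      rw [hrec 0]
      have hden1 : lam / n + |b 0| ≠ 0 := by positivity
      have hden2 : lam + n * |b 0| * ∑ m ∈ Finset.range 1, c ^ m ≠ 0 := (hD 1).ne'
      simp only [zero_add, Finset.range_one, Finset.sum_singleton, pow_zero, mul_one, pow_one] at hden2 ⊢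
      rw [hc_def]
      rcases lt_or_gt_of_ne hβhat with h | h
      · rw [Real.sign_of_neg h, abs_of_neg h]; field_simp
      · rw [Real.sign_of_pos h, abs_of_pos h]; field_simp
    · have hk' : 1 ≤ k := by omega
      have hbk := ih hk'
      have habs : |b k| = c ^ k * lam * |b 0| / (lam + n * |b 0| * ∑ m ∈ Finset.range k, c ^ m) := by
        rw [hbk, abs_div, abs_of_pos (hD k), abs_mul, abs_mul, abs_mul, hsign, mul_one,
          abs_abs, abs_of_pos (pow_pos hc k), abs_of_pos hlam]
      rw [hrec k, habs]
      set S : ℝ := ∑ m ∈ Finset.range k, c ^ m with hS_def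
      have hSpos : 0 ≤ S := Finset.sum_nonneg fun m _ => (pow_pos hc m).le
      rw [Finset.sum_range_succ, ← hS_def, pow_succ]
      set A : ℝ := c ^ k with hA_def
      have hApos : 0 < A := pow_pos hc k
      have hDk : lam + n * |b 0| * S ≠ 0 := (hD k).ne'
      have hDk1 : lam + n * |b 0| * (S + A) ≠ 0 := by
        have : 0 ≤ (n : ℝ) * |b 0| * (S + A) :=
          mul_nonneg (mul_nonneg hn'.le hb0abs.le) (add_nonneg hSpos hApos.le)
        exact ne_of_gt (by linarith)
      have hmid : lam / n + A * lam * |b 0| / (lam + n * |b 0| * S) ≠ 0 := by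
        have h1 : 0 ≤ A * lam * |b 0| / (lam + n * |b 0| * S) :=
          div_nonneg (mul_nonneg (mul_nonneg hApos.le hlam.le) hb0abs.le) (hD k).le
        exact ne_of_gt (by have := div_pos hlam hn'; linarith)
      rw [hc_def]
      rcases lt_or_gt_of_ne hβhat with h | h
      · rw [Real.sign_of_neg h, abs_of_neg h]; field_simp; ring
      · rw [Real.sign_of_pos h, abs_of_pos h]; field_simp; ring
end

section
/- Let β* = ST(β̂, λ/n) denote the one-dimensional lasso solution. For the recursion b^{(k+1)} = |b^{(k)}| β̂ / (λ/n + |b^{(k)}|), the sign of (b^{(k)} − β*) is the same for all k ≥ 1: if |b^{(1)}| > |β*| then |b^{(k)}| > |β*| for all k ≥ 1, if |b^{(1)}| < |β*| then |b^{(k)}| < |β*| for all k, and if |b^{(1)}| = |β*| then equality persists. -/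
noncomputable def softThreshold (a c : ℝ) : ℝ := if c < |a| then a - c * Real.sign a else 0

theorem slog_one_dim_same_side (lam : ℝ) (hlam : 0 < lam) (n : ℕ) (hn : 1 ≤ n)
    (βhat : ℝ) (hβhat : βhat ≠ 0) (b : ℕ → ℝ) (hb0 : b 0 ≠ 0)
    (hrec : ∀ k, b (k + 1) = |b k| * βhat / (lam / n + |b k|)) :
    (|b 1| > |softThreshold βhat (lam / n)| →
        ∀ k : ℕ, 1 ≤ k → |b k| > |softThreshold βhat (lam / n)|) ∧
    (|b 1| < |softThreshold βhat (lam / n)| →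
        ∀ k : ℕ, 1 ≤ k → |b k| < |softThreshold βhat (lam / n)|) ∧
    (|b 1| = |softThreshold βhat (lam / n)| →
        ∀ k : ℕ, 1 ≤ k → |b k| = |softThreshold βhat (lam / n)|) := by
  have hnn : (0:ℝ) < n := by
    have : (1:ℝ) ≤ n := by exact_mod_cast hn
    linarith
  set c : ℝ := lam / n with hcdef
  have hc : 0 < c := div_pos hlam hnn
  have hB : 0 < |βhat| := abs_pos.mpr hβhat
  set s : ℝ := |softThreshold βhat c| with hsdef
  have hs0 : 0 ≤ s := abs_nonneg _
  have habs : ∀ k, |b (k+1)| = |b k| * |βhat| / (c + |b k|) := by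
    intro k
    rw [hrec k, abs_div, abs_mul, abs_abs,
      abs_of_pos (by positivity : (0:ℝ) < c + |b k|)]
  have hfix : s * |βhat| / (c + s) = s := by
    by_cases h : c < |βhat|
    · have hsval : s = |βhat| - c := by
        simp only [hsdef, softThreshold, if_pos h]
        rcases hβhat.lt_or_gt with hneg | hpos
        · rw [Real.sign_of_neg hneg]
          rw [abs_of_neg hneg] at h ⊢
          have hlt : βhat - c * (-1) < 0 := by linarith
          rw [abs_of_neg hlt]; ring
        · rw [Real.sign_of_pos hpos]
          rw [abs_of_pos hpos] at h ⊢
          have hlt : 0 < βhat - c * 1 := by linarith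
          rw [abs_of_pos hlt]; ring
      rw [hsval]
      have h2 : c + (|βhat| - c) = |βhat| := by ring
      rw [h2]
      field_simp
    · simp only [hsdef, softThreshold, if_neg h, abs_zero, zero_mul, zero_div]
  have hmono : ∀ x y : ℝ, 0 ≤ x → x < y →
      x * |βhat| / (c + x) < y * |βhat| / (c + y) := by
    intro x y hx hxy
    rw [div_lt_div_iff₀ (by linarith) (by linarith)]
    nlinarith [mul_pos (mul_pos hc hB) (sub_pos.mpr hxy)]
  refine ⟨?_, ?_, ?_⟩ <;> intro h1 k hk
  · induction k, hk using Nat.le_induction with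
    | base => exact h1
    | succ k hk ih =>
      rw [habs k, ← hfix]
      exact hmono s (|b k|) hs0 ih
  · induction k, hk using Nat.le_induction with
    | base => exact h1
    | succ k hk ih =>
      rw [habs k]
      calc |b k| * |βhat| / (c + |b k|) < s * |βhat| / (c + s) :=
            hmono (|b k|) s (abs_nonneg _) ih
        _ = s := hfix
  · induction k, hk using Nat.le_induction with
    | base => exact h1
    | succ k hk ih => rw [habs k, ih, hfix]
end

section
/- The map f(b) = |b| β̂ / (λ/n + |b|) on ℝ has exactly the fixed points 0 and ST(β̂, λ/n) (which may coincide when n|β̂| ≤ λ). -/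
theorem slog_one_dim_fixed_points (lam : ℝ) (hlam : 0 < lam) (n : ℕ) (hn : 1 ≤ n)
    (βhat : ℝ) :
    ∀ b : ℝ, |b| * βhat / (lam / n + |b|) = b ↔
      (b = 0 ∨ b = softThreshold βhat (lam / n)) := by
  have hn' : (0:ℝ) < n := by exact_mod_cast Nat.lt_of_lt_of_le Nat.zero_lt_one hn
  set c := lam / n with hcdef
  have hc : 0 < c := div_pos hlam hn'
  intro b
  constructor
  · intro h
    rcases lt_trichotomy b 0 with hb | hb | hb
    · right
      have hpos : 0 < c + |b| := by positivity
      have h1 : |b| * βhat = b * (c + |b|) := by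
        field_simp at h; linarith [h]
      rw [abs_of_neg hb] at h1
      have hβ : βhat = b - c :=
        mul_left_cancel₀ (ne_of_lt hb) (show b * βhat = b * (b - c) by nlinarith)
      have hβneg : βhat < -c := by linarith
      have habs : c < |βhat| := by rw [abs_of_neg (by linarith)]; linarith
      rw [softThreshold, if_pos habs, Real.sign_of_neg (by linarith)]
      linarith
    · left; exact hb
    · right
      have hpos : 0 < c + |b| := by positivity
      have h1 : |b| * βhat = b * (c + |b|) := by
        field_simp at h; linarith [h]
      rw [abs_of_pos hb] at h1
      have hβ : βhat = c + b := mul_left_cancel₀ (ne_of_gt hb) h1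
      have habs : c < |βhat| := by rw [abs_of_pos (by linarith)]; linarith
      rw [softThreshold, if_pos habs, Real.sign_of_pos (by linarith)]
      linarith
  · rintro (rfl | rfl)
    · simp
    · rw [softThreshold]
      split_ifs with h
      · rcases lt_trichotomy βhat 0 with hβ | hβ | hβ
        · rw [Real.sign_of_neg hβ]
          rw [abs_of_neg hβ] at h
          have : |βhat - c * (-1)| = -(βhat + c) := by
            rw [abs_of_neg (by linarith)]; ring
          rw [this]
          have hne : βhat ≠ 0 := ne_of_lt hβ
          field_simp [hne]
          ring
        · simp [hβ] at h; linarith [abs_nonneg (0:ℝ), hc, h]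
        · rw [Real.sign_of_pos hβ]
          rw [abs_of_pos hβ] at h
          have : |βhat - c * 1| = βhat - c := by
            rw [abs_of_pos (by linarith)]; ring
          rw [this]
          have hne : βhat ≠ 0 := ne_of_gt hβ
          field_simp [hne]
          ring
      · simp
end

section
/- Suppose n|β̂| = λ and b^{(0)} ≠ 0. Then the recursion b^{(k+1)} = |b^{(k)}| β̂ / (λ/n + |b^{(k)}|) satisfies |b^{(k)}| ≤ λ/(n k) for all k ≥ 1. -/
theorem slog_one_dim_rate_eq (lam : ℝ) (hlam : 0 < lam) (n : ℕ) (hn : 1 ≤ n)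
    (βhat : ℝ) (hcase : (n : ℝ) * |βhat| = lam) (b : ℕ → ℝ) (hb0 : b 0 ≠ 0)
    (hrec : ∀ k, b (k + 1) = |b k| * βhat / (lam / n + |b k|)) :
    ∀ k : ℕ, 1 ≤ k → |b k| ≤ lam / (n * k) := by
  have hn0 : (0:ℝ) < n := by exact_mod_cast Nat.lt_of_lt_of_le Nat.zero_lt_one hn
  set c : ℝ := lam / n with hc
  have hc0 : 0 < c := div_pos hlam hn0
  have hβ : |βhat| = c := by
    rw [hc, eq_div_iff hn0.ne']
    linarith [hcase]
  have habs : ∀ k, |b (k + 1)| = |b k| * c / (c + |b k|) := by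
    intro k
    have hden : 0 < c + |b k| := by
      have := abs_nonneg (b k); linarith
    rw [hrec k, abs_div, abs_mul, abs_abs, hβ, abs_of_pos hden]
  -- main inductive claim
  have main : ∀ k : ℕ, |b (k + 1)| ≤ c / (k + 1) := by
    intro k
    induction k with
    | zero =>
      rw [habs 0]
      have hden : 0 < c + |b 0| := by have := abs_nonneg (b 0); linarith
      rw [div_le_iff₀ hden]
      have := abs_nonneg (b 0)
      push_cast
      nlinarith
    | succ k ih =>
      rw [habs (k + 1)]
      have hx := abs_nonneg (b (k + 1))
      have hden : 0 < c + |b (k + 1)| := by linarith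
      have hk1 : (0:ℝ) < (k:ℝ) + 1 := by positivity
      have hk2 : (0:ℝ) < ((k:ℝ) + 1) + 1 := by positivity
      rw [le_div_iff₀ hk1] at ih
      rw [div_le_div_iff₀ hden (by push_cast; positivity : (0:ℝ) < ((k+1:ℕ):ℝ) + 1)]
      push_cast
      nlinarith [mul_le_mul_of_nonneg_left ih hc0.le]
  intro k hk
  obtain ⟨m, rfl⟩ := Nat.exists_eq_add_of_le hk
  calc |b (1 + m)| = |b (m + 1)| := by rw [Nat.add_comm]
    _ ≤ c / (m + 1) := main m
    _ = lam / ((n : ℝ) * ((1 + m : ℕ) : ℝ)) := by rw [hc, div_div]; push_cast; ring_nf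
end

section
/- Suppose n|β̂| > λ and b^{(0)} ≠ 0, and let β* = (|β̂| − λ/n) sign(β̂). Then the recursion b^{(k+1)} = |b^{(k)}| β̂ / (λ/n + |b^{(k)}|) satisfies |b^{(k)} − β*| ≤ (λ/(n|β̂|))^k |β̂/b^{(0)}| |b^{(0)} − β*| for all k ≥ 1; in particular b^{(k)} → β* geometrically. -/
theorem slog_one_dim_rate_gt (lam : ℝ) (hlam : 0 < lam) (n : ℕ) (hn : 1 ≤ n)
    (βhat : ℝ) (hcase : lam < (n : ℝ) * |βhat|) (b : ℕ → ℝ) (hb0 : b 0 ≠ 0)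
    (βstar : ℝ) (hβstar : βstar = (|βhat| - lam / n) * Real.sign βhat)
    (hrec : ∀ k, b (k + 1) = |b k| * βhat / (lam / n + |b k|)) :
    ∀ k : ℕ, 1 ≤ k →
      |b k - βstar| ≤ (lam / ((n : ℝ) * |βhat|)) ^ k * |βhat / b 0| * |b 0 - βstar| := by
  have hn0 : (0:ℝ) < n := by exact_mod_cast hn
  set t : ℝ := lam / n with ht_def
  have ht : 0 < t := div_pos hlam hn0
  have habs : t < |βhat| := by
    rw [ht_def, div_lt_iff₀ hn0]
    nlinarith
  have hβ0 : (0:ℝ) < |βhat| := lt_trans ht habs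
  have hβne : βhat ≠ 0 := by
    intro h; rw [h, abs_zero] at hβ0; exact lt_irrefl _ hβ0
  have hs : |Real.sign βhat| = 1 := by
    rcases lt_or_gt_of_ne hβne with h | h
    · rw [Real.sign_of_neg h]; norm_num
    · rw [Real.sign_of_pos h]; norm_num
  -- identity for |b (k+1)|
  have habsrec : ∀ k, |b (k+1)| = |b k| * |βhat| / (t + |b k|) := by
    intro k
    have hpos : 0 < t + |b k| := by positivity
    rw [hrec k, abs_div, abs_mul, abs_abs, abs_of_pos hpos]
  -- identity for the error
  have herr : ∀ k, |b (k+1) - βstar| = t * abs (|b k| - (|βhat| - t)) / (t + |b k|) := by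
    intro k
    have hpos : 0 < t + |b k| := by positivity
    have key : b (k+1) - βstar
        = Real.sign βhat * (t * (|b k| - (|βhat| - t)) / (t + |b k|)) := by
      rcases lt_or_gt_of_ne hβne with h | h
      · rw [hrec k, hβstar, Real.sign_of_neg h, abs_of_neg h]
        field_simp
        ring
      · rw [hrec k, hβstar, Real.sign_of_pos h, abs_of_pos h]
        field_simp
        ring
    rw [key, abs_mul, hs, one_mul, abs_div, abs_of_pos hpos, abs_mul,
      abs_of_pos ht]
  -- main induction
  have main : ∀ k, b k ≠ 0 ∧
      |b k - βstar| ≤ (t / |βhat|) ^ k * (|b k| / |b 0|) * |b 0 - βstar| := by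
    intro k
    induction k with
    | zero =>
      refine ⟨hb0, ?_⟩
      have : (0:ℝ) < |b 0| := abs_pos.mpr hb0
      rw [pow_zero, one_mul, div_self (ne_of_gt this), one_mul]
    | succ k ih =>
      obtain ⟨hne, hIH⟩ := ih
      have hbk : 0 < |b k| := abs_pos.mpr hne
      have hpos : 0 < t + |b k| := by positivity
      have hb0pos : 0 < |b 0| := abs_pos.mpr hb0
      constructor
      · rw [hrec k]
        apply div_ne_zero
        · exact mul_ne_zero (ne_of_gt hbk) hβne
        · exact ne_of_gt hpos
      · have hstar : |βstar| = |βhat| - t := by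
          rw [hβstar, abs_mul, hs, mul_one, abs_of_pos (by linarith)]
        have h1 : abs (|b k| - (|βhat| - t)) ≤ |b k - βstar| := by
          rw [← hstar]
          exact abs_abs_sub_abs_le_abs_sub _ _
        have h2 : |b (k+1) - βstar| ≤ t / (t + |b k|) * |b k - βstar| := by
          rw [herr k]
          calc t * abs (|b k| - (|βhat| - t)) / (t + |b k|)
              ≤ t * |b k - βstar| / (t + |b k|) := by gcongr
            _ = t / (t + |b k|) * |b k - βstar| := by ring
        calc |b (k+1) - βstar|
            ≤ t / (t + |b k|) * ((t / |βhat|) ^ k * (|b k| / |b 0|) * |b 0 - βstar|) := by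
              refine h2.trans (mul_le_mul_of_nonneg_left hIH ?_)
              positivity
          _ = (t / |βhat|) ^ (k+1) * (|b (k+1)| / |b 0|) * |b 0 - βstar| := by
              rw [habsrec k]
              field_simp
              linear_combination (-(t * (t / |βhat|) ^ k * |b 0 - βstar|)) * mul_inv_cancel₀ (ne_of_gt hβ0)
  -- conclusion
  intro k hk
  obtain ⟨j, rfl⟩ := Nat.exists_eq_add_of_le hk
  set m := 1 + j with hm
  have hb0pos : 0 < |b 0| := abs_pos.mpr hb0
  have hlek : |b m| ≤ |βhat| := by
    have : m = j + 1 := by omega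
    rw [this, habsrec j]
    rw [div_le_iff₀ (by positivity)]
    nlinarith [abs_nonneg (b j), abs_nonneg βhat]
  have h := (main m).2
  have hfinal : (t / |βhat|) ^ m * (|b m| / |b 0|) * |b 0 - βstar|
      ≤ (t / |βhat|) ^ m * (|βhat| / |b 0|) * |b 0 - βstar| := by
    gcongr
  have heq : lam / ((n:ℝ) * |βhat|) = t / |βhat| := by
    rw [ht_def, div_div]
  rw [heq, abs_div]
  exact h.trans hfinal
end

section
/- Let b ∈ (0,∞)^p and define a = A(b) = (X^T X + λ diag(1/b₁,…,1/b_p))^{-1} X^T y. If all components of a are nonzero, then the Jacobian of the inverse map b as a function of a has determinant (1/λ^p) (∏_j b_j²/a_j) det(X^T X + λ diag(1/b_j)), which is nonzero; consequently A cannot map a set of positive Lebesgue measure in (0,∞)^p (on which A has nonzero components) into a Lebesgue-null set. -/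
theorem slog_jacobian_nonzero {n p : ℕ} (X : Matrix (Fin n) (Fin p) ℝ) (y : Fin n → ℝ)
    (lam : ℝ) (hlam : 0 < lam)
    (A : (Fin p → ℝ) → (Fin p → ℝ))
    (hA : ∀ b : Fin p → ℝ,
      A b = (X.transpose * X + lam • Matrix.diagonal fun j => (b j)⁻¹)⁻¹.mulVec
        (X.transpose.mulVec y)) :
    (∀ b : Fin p → ℝ, (∀ j, 0 < b j) → (∀ j, A b j ≠ 0) →
      (lam⁻¹ • (Matrix.diagonal fun j => (b j) ^ 2 / A b j) *
          (X.transpose * X + lam • Matrix.diagonal fun j => (b j)⁻¹)).det =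
        (1 / lam ^ p) * (∏ j, (b j) ^ 2 / A b j) *
          (X.transpose * X + lam • Matrix.diagonal fun j => (b j)⁻¹).det ∧
      (lam⁻¹ • (Matrix.diagonal fun j => (b j) ^ 2 / A b j) *
          (X.transpose * X + lam • Matrix.diagonal fun j => (b j)⁻¹)).det ≠ 0) ∧
    ∀ s : Set (Fin p → ℝ),
      s ⊆ {b | (∀ j, 0 < b j) ∧ ∀ j, A b j ≠ 0} →
      0 < MeasureTheory.volume s → MeasureTheory.volume (A '' s) ≠ 0 := by
  have hlam0 : lam ≠ 0 := ne_of_gt hlam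
  -- the matrix is invertible whenever A b has a nonzero component
  have hdet : ∀ b : Fin p → ℝ, (∃ j, A b j ≠ 0) →
      (X.transpose * X + lam • Matrix.diagonal fun j => (b j)⁻¹).det ≠ 0 := by
    intro b ⟨j, hj⟩
    by_contra h
    have hM : (X.transpose * X + lam • Matrix.diagonal fun j => (b j)⁻¹)⁻¹ = 0 :=
      Matrix.nonsing_inv_apply_not_isUnit _ (by simp [isUnit_iff_ne_zero, h])
    apply hj
    rw [hA b, hM]
    simp [Matrix.zero_mulVec]
  constructor
  · intro b hpos hne
    have hdetM : (X.transpose * X + lam • Matrix.diagonal fun j => (b j)⁻¹).det ≠ 0 := by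
      rcases Nat.eq_zero_or_pos p with hp | hp
      · subst hp; simp [Matrix.det_fin_zero]
      · exact hdet b ⟨⟨0, hp⟩, hne _⟩
    constructor
    · rw [Matrix.det_mul, Matrix.det_smul, Matrix.det_diagonal]
      simp [Fintype.card_fin, inv_pow, one_div]
    · rw [Matrix.det_mul, Matrix.det_smul, Matrix.det_diagonal]
      refine mul_ne_zero (mul_ne_zero (pow_ne_zero _ (inv_ne_zero hlam0)) ?_) hdetM
      exact Finset.prod_ne_zero_iff.mpr fun j _ =>
        div_ne_zero (pow_ne_zero _ (ne_of_gt (hpos j))) (hne j)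
  · intro s hsub hspos himg
    rcases Nat.eq_zero_or_pos p with hp | hp
    · -- subsingleton case
      have : Subsingleton (Fin p → ℝ) := by subst hp; infer_instance
      have hs : s ⊆ A '' s := fun x hx => ⟨x, hx, Subsingleton.elim _ _⟩
      exact hspos.ne' (le_antisymm (le_trans (MeasureTheory.measure_mono hs) himg.le)
        (zero_le))
    · -- explicit inverse map
      set B : (Fin p → ℝ) → (Fin p → ℝ) := fun a j =>
        lam * a j / (X.transpose.mulVec y j - (X.transpose * X).mulVec a j) with hB
      -- on s, the denominator at A b equals lam * (b j)⁻¹ * A b j and B (A b) = b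
      have hden : ∀ b ∈ s, ∀ j, X.transpose.mulVec y j - (X.transpose * X).mulVec (A b) j
          = lam * ((b j)⁻¹ * A b j) := by
        intro b hb j
        obtain ⟨hbpos, hbne⟩ := hsub hb
        have hdetM := hdet b ⟨⟨0, hp⟩, hbne _⟩
        have hMa : (X.transpose * X + lam • Matrix.diagonal fun j => (b j)⁻¹).mulVec (A b)
            = X.transpose.mulVec y := by
          rw [hA b, Matrix.mulVec_mulVec, Matrix.mul_nonsing_inv _
            (by simp [isUnit_iff_ne_zero, hdetM]), Matrix.one_mulVec]
        have := congrFun hMa j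
        rw [Matrix.add_mulVec, Matrix.smul_mulVec] at this
        simp only [Pi.add_apply, Pi.smul_apply, Matrix.mulVec_diagonal, smul_eq_mul] at this
        linarith [this]
      have hBA : ∀ b ∈ s, B (A b) = b := by
        intro b hb
        obtain ⟨hbpos, hbne⟩ := hsub hb
        funext j
        rw [hB]
        simp only
        rw [hden b hb j]
        field_simp [hlam0, ne_of_gt (hbpos j), hbne j]
      have hsub2 : s ⊆ B '' (A '' s) := by
        intro b hb
        exact ⟨A b, Set.mem_image_of_mem _ hb, hBA b hb⟩
      -- B is differentiable on A '' s
      have hdiff : DifferentiableOn ℝ B (A '' s) := by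
        intro a ha
        obtain ⟨b, hb, rfl⟩ := ha
        obtain ⟨hbpos, hbne⟩ := hsub hb
        apply DifferentiableAt.differentiableWithinAt
        rw [differentiableAt_pi]
        intro j
        simp only [hB]
        have hdne : X.transpose.mulVec y j - (X.transpose * X).mulVec (A b) j ≠ 0 := by
          rw [hden b hb j]
          exact mul_ne_zero hlam0 (mul_ne_zero (inv_ne_zero (ne_of_gt (hbpos j))) (hbne j))
        have h1 : DifferentiableAt ℝ (fun a : Fin p → ℝ => lam * a j) (A b) :=
          (differentiableAt_const _).mul (differentiable_pi.mp differentiable_id j).differentiableAt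
        have h2 : DifferentiableAt ℝ
            (fun a : Fin p → ℝ => X.transpose.mulVec y j - (X.transpose * X).mulVec a j) (A b) := by
          apply (differentiableAt_const _).sub
          simp only [Matrix.mulVec, dotProduct]
          exact DifferentiableAt.fun_sum fun k _ =>
            (differentiableAt_const _).mul (differentiable_pi.mp differentiable_id k).differentiableAt
        simp only [div_eq_mul_inv]
        exact h1.mul (h2.inv hdne)
      -- conclude
      have h0 : MeasureTheory.volume (B '' (A '' s)) = 0 :=
        MeasureTheory.addHaar_image_eq_zero_of_differentiableOn_of_addHaar_eq_zero
          MeasureTheory.volume hdiff himg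
      exact hspos.ne' (le_antisymm (le_trans (MeasureTheory.measure_mono hsub2) h0.le)
        (zero_le))
end
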